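/- Let λ be a weight diagram (f_λ : ℤ → {0,1} with n ones). Define ▲(λ) as the set of weight diagrams μ with n ones such that for every i ∈ c_λ: f_μ(i) + Σ_{j ∈ ⟵i▲(λ)} f_μ(j) = 1; and ▼(λ) as the set of weight diagrams μ with n ones such that for every j ∉ c_λ: (1 - f_μ(j)) + Σ_{i ∈ j⇢▼(λ)} (1 - f_μ(i)) = 1. Then ▲(λ) ∩ ▼(λ) = {λ}. -/

import Mathlib

/-- The ±1 marker of a weight diagram `f : ℤ → {0,1}`: `g(i) = (-1)^(f(i)+1)`,
i.e. `1` on black balls and `-1` on empty positions. -/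
def bg (f : ℤ → ℤ) (i : ℤ) : ℤ := if f i = 1 then 1 else -1

/-- `r⁺(i,j) = Σ_{s=j}^{i-1} g(s)`. -/
noncomputable def rpl (f : ℤ → ℤ) (i j : ℤ) : ℤ := ∑ s ∈ Finset.Icc j (i - 1), bg f s

/-- `r⁻(i,j) = -Σ_{s=j+1}^{i} g(s)`. -/
noncomputable def rmi (f : ℤ → ℤ) (i j : ℤ) : ℤ := -∑ s ∈ Finset.Icc (j + 1) i, bg f s

/-- The set `⟵i▲(f)` of targets of solid arrows starting at position `i`:
`{j < i : r⁺(i,j) = 0 and r⁺(i,s) ≥ 0 for all j < s < i}`. -/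
def solidT (f : ℤ → ℤ) (i : ℤ) : Set ℤ :=
  {j | j < i ∧ rpl f i j = 0 ∧ ∀ s, j < s → s < i → 0 ≤ rpl f i s}

/-- The set `j⇢▼(f)` of targets of dashed arrows starting at position `j`:
`{i > j : r⁻(i,j) = 0 and r⁻(s,j) ≥ 0 for all j < s < i}`. -/
def dashT (f : ℤ → ℤ) (j : ℤ) : Set ℤ :=
  {i | j < i ∧ rmi f i j = 0 ∧ ∀ s, j < s → s < i → 0 ≤ rmi f s j}

/-- `f : ℤ → ℤ` is a weight diagram with `n` black balls: it takes values in `{0,1}`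
and has exactly `n` positions with value `1`. -/
def IsWD (f : ℤ → ℤ) (n : ℕ) : Prop :=
  (∀ i, f i = 0 ∨ f i = 1) ∧ {i | f i = 1}.Finite ∧ {i | f i = 1}.ncard = n

/-- `μ ∈ ▲(fl)`: `μ` is a weight diagram with `n` balls such that for every black ball
`i` of `fl`, exactly one position among `{i} ∪ ⟵i▲(fl)` carries a black ball of `μ`
(this is the condition `f_μ(i) + Σ_{j ∈ ⟵i▲(fl)} f_μ(j) = 1`). -/
def inUp (fl : ℤ → ℤ) (n : ℕ) (μ : ℤ → ℤ) : Prop :=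
  IsWD μ n ∧ ∀ i, fl i = 1 → ∃! p, (p = i ∨ p ∈ solidT fl i) ∧ μ p = 1

/-- `μ ∈ ▼(fl)`: `μ` is a weight diagram with `n` balls such that for every empty
position `j` of `fl`, exactly one position among `{j} ∪ j⇢▼(fl)` is empty in `μ`
(this is the condition `(1 - f_μ(j)) + Σ_{i ∈ j⇢▼(fl)} (1 - f_μ(i)) = 1`). -/
def inDown (fl : ℤ → ℤ) (n : ℕ) (μ : ℤ → ℤ) : Prop :=
  IsWD μ n ∧ ∀ j, fl j ≠ 1 → ∃! p, (p = j ∨ p ∈ dashT fl j) ∧ μ p ≠ 1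


lemma sum_split_left {F : ℤ → ℤ} {a b : ℤ} (h : a ≤ b) :
    ∑ s ∈ Finset.Icc a b, F s = F a + ∑ s ∈ Finset.Icc (a+1) b, F s := by
  have he : Finset.Icc a b = insert a (Finset.Icc (a+1) b) := by
    ext x; simp only [Finset.mem_Icc, Finset.mem_insert]; omega
  rw [he, Finset.sum_insert (by simp only [Finset.mem_Icc]; omega)]

lemma sum_split_right {F : ℤ → ℤ} {a b : ℤ} (h : a ≤ b) :
    ∑ s ∈ Finset.Icc a b, F s = (∑ s ∈ Finset.Icc a (b-1), F s) + F b := by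
  have he : Finset.Icc a b = insert b (Finset.Icc a (b-1)) := by
    ext x; simp only [Finset.mem_Icc, Finset.mem_insert]; omega
  rw [he, Finset.sum_insert (by simp only [Finset.mem_Icc]; omega), add_comm]

/-- Targets of solid arrows are empty positions. -/
lemma solid_target {f : ℤ → ℤ} {i j : ℤ} (h : j ∈ solidT f i) : f j ≠ 1 := by
  obtain ⟨hlt, hz, hnn⟩ := h
  have hsplit := sum_split_left (F := bg f) (a := j) (b := i - 1) (by omega)
  have hT : 0 ≤ ∑ s ∈ Finset.Icc (j+1) (i-1), bg f s := by
    rcases lt_or_ge (j+1) i with h' | h'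
    · exact hnn (j+1) (by omega) h'
    · rw [Finset.Icc_eq_empty (by omega), Finset.sum_empty]
  have hz' : ∑ s ∈ Finset.Icc j (i-1), bg f s = 0 := hz
  intro hfj
  have : bg f j = 1 := by unfold bg; simp [hfj]
  omega

/-- Targets of dashed arrows are black balls. -/
lemma dash_target {f : ℤ → ℤ} {i j : ℤ} (h : i ∈ dashT f j) : f i = 1 := by
  obtain ⟨hlt, hz, hnn⟩ := h
  have hsplit := sum_split_right (F := bg f) (a := j + 1) (b := i) (by omega)
  have hT : ∑ s ∈ Finset.Icc (j+1) (i-1), bg f s ≤ 0 := by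
    rcases lt_or_ge j (i-1) with h' | h'
    · have := hnn (i-1) h' (by omega)
      unfold rmi at this; omega
    · rw [Finset.Icc_eq_empty (by omega), Finset.sum_empty]
  have hz' : -∑ s ∈ Finset.Icc (j+1) i, bg f s = 0 := hz
  by_contra hfi
  have : bg f i = -1 := by unfold bg; simp [hfi]
  omega

/-- Key nesting lemma: a dashed arrow starting at a solid-arrow target `j` of `i`
ends strictly before `i`. -/
lemma key {f : ℤ → ℤ} {i j i' : ℤ} (hj : j ∈ solidT f i) (hi' : i' ∈ dashT f j) :
    i' < i := by
  by_contra hle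
  push_neg at hle
  have hfj : f j ≠ 1 := solid_target hj
  obtain ⟨hlt, hz, -⟩ := hj
  have hbgj : bg f j = -1 := by unfold bg; simp [hfj]
  have hsplit := sum_split_left (F := bg f) (a := j) (b := i - 1) (by omega)
  have hz' : ∑ s ∈ Finset.Icc j (i-1), bg f s = 0 := hz
  have hone : ∑ s ∈ Finset.Icc (j+1) (i-1), bg f s = 1 := by omega
  have hji : j < i - 1 := by
    by_contra h'
    rw [Finset.Icc_eq_empty (by omega), Finset.sum_empty] at hone
    omega
  have := hi'.2.2 (i-1) hji (by omega)
  unfold rmi at this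
  omega


/-- For any weight diagram `λ` with `n` black balls, `▲(λ) ∩ ▼(λ) = {λ}`. -/
theorem stmt8 (n : ℕ) (fl : ℤ → ℤ) (hfl : IsWD fl n) :
    {μ : ℤ → ℤ | inUp fl n μ ∧ inDown fl n μ} = {fl} := by
  ext μ
  simp only [Set.mem_setOf_eq, Set.mem_singleton_iff, inUp, inDown, IsWD]
  constructor
  · rintro ⟨⟨⟨hμ01, hμfin, hμn⟩, hup⟩, -, hdown⟩
    obtain ⟨hfl01, hflfin, hfln⟩ := hfl
    have step : ∀ i : ℤ, fl i = 1 → μ i ≠ 1 → ∃ i', i' < i ∧ fl i' = 1 ∧ μ i' ≠ 1 := by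
      intro i h1 h2
      obtain ⟨p, ⟨hp1, hp2⟩, -⟩ := hup i h1
      have hpne : p ≠ i := fun h => h2 (h ▸ hp2)
      have hps : p ∈ solidT fl i := hp1.resolve_left hpne
      have hflp : fl p ≠ 1 := solid_target hps
      obtain ⟨q, ⟨hq1, hq2⟩, -⟩ := hdown p hflp
      have hqne : q ≠ p := fun h => hq2 (h ▸ hp2)
      have hqd : q ∈ dashT fl p := hq1.resolve_left hqne
      exact ⟨q, key hps hqd, dash_target hqd, hq2⟩
    have hS : ∀ p, fl p = 1 → μ p = 1 := by
      by_contra hcon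
      push_neg at hcon
      obtain ⟨p0, hp0fl, hp0μ⟩ := hcon
      have hSfin : ({p : ℤ | fl p = 1 ∧ μ p ≠ 1}).Finite :=
        hflfin.subset (fun x hx => hx.1)
      obtain ⟨a, haS, hamin⟩ :=
        Set.exists_min_image _ id hSfin ⟨p0, hp0fl, hp0μ⟩
      obtain ⟨i', hlt, h1', h2'⟩ := step a haS.1 haS.2
      have := hamin i' ⟨h1', h2'⟩
      simp only [id] at this
      omega
    have hseteq : {p : ℤ | fl p = 1} = {p : ℤ | μ p = 1} :=
      Set.eq_of_subset_of_ncard_le (fun p hp => hS p hp)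
        (le_of_eq (hμn.trans hfln.symm)) hμfin
    funext p
    have hiff : fl p = 1 ↔ μ p = 1 := Set.ext_iff.mp hseteq p
    rcases hμ01 p with h | h <;> rcases hfl01 p with h' | h' <;> omega
  · rintro rfl
    obtain ⟨hfl01, hflfin, hfln⟩ := hfl
    refine ⟨⟨⟨hfl01, hflfin, hfln⟩, fun i hi => ⟨i, ⟨Or.inl rfl, hi⟩, ?_⟩⟩,
      ⟨hfl01, hflfin, hfln⟩, fun j hj => ⟨j, ⟨Or.inl rfl, hj⟩, ?_⟩⟩
    · rintro q ⟨hq1, hq2⟩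
      exact hq1.resolve_right (fun hs => solid_target hs hq2)
    · rintro q ⟨hq1, hq2⟩
      exact hq1.resolve_right (fun hd => hq2 (dash_target hd))
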